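/- As λ → −∞, λ − Λ_r(λ) → −ln(q + p_0), and λ − Λ_l(λ) → −ln(1 − q). -/

import Mathlib

open MeasureTheory ProbabilityTheory Filter Topology

/-- `φ(s) = q + ∑_{n≥0} p_n s^{n+1}`. -/
noncomputable def phi (q : ℝ) (p : ℕ → ℝ) (s : ℝ) : ℝ :=
  q + ∑' n : ℕ, p n * s ^ (n + 1)

/-- `φ'(s) = ∑_{n≥0} (n+1) p_n s^n`. -/
noncomputable def phiDeriv (p : ℕ → ℝ) (s : ℝ) : ℝ :=
  ∑' n : ℕ, (n + 1 : ℝ) * p n * s ^ n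

/-- `h s` is the minimal nonnegative solution `x ∈ [0,1]` of `x = s * φ x`, for every
`s ∈ [0,1]`. -/
def IsMinimalSolution (φ : ℝ → ℝ) (h : ℝ → ℝ) : Prop :=
  ∀ s ∈ Set.Icc (0 : ℝ) 1, h s ∈ Set.Icc (0 : ℝ) 1 ∧ h s = s * φ (h s) ∧
    ∀ y ∈ Set.Icc (0 : ℝ) 1, y = s * φ y → h s ≤ y

/-- `Λ_r(λ) = ln(1 + q e^λ − q e^λ / h(e^λ))` for `λ < 0`, and `Λ_r(0) = 0`
(also on `λ > 0`, which is irrelevant). -/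
noncomputable def LambdaR (q : ℝ) (h : ℝ → ℝ) (l : ℝ) : ℝ :=
  if l < 0 then Real.log (1 + q * Real.exp l - q * Real.exp l / h (Real.exp l)) else 0

/-- `Λ_r*(x) = sup_{λ ≤ 0} (xλ − Λ_r(λ))`, as an extended real number. -/
noncomputable def LambdaRStar (q : ℝ) (h : ℝ → ℝ) (x : ℝ) : EReal :=
  ⨆ l ∈ Set.Iic (0 : ℝ), ((x * l - LambdaR q h l : ℝ) : EReal)

/-- `Λ_l(λ) = λ + ln((1 − φ(h(e^λ)))/(1 − h(e^λ)))` for `λ < 0`, and `Λ_l(0) = 0`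
(also on `λ > 0`, which is irrelevant). -/
noncomputable def LambdaL (φ : ℝ → ℝ) (h : ℝ → ℝ) (l : ℝ) : ℝ :=
  if l < 0 then l + Real.log ((1 - φ (h (Real.exp l))) / (1 - h (Real.exp l))) else 0

/-- `Λ_l*(x) = sup_{λ ≤ 0} (xλ − Λ_l(λ))`, as an extended real number. -/
noncomputable def LambdaLStar (φ : ℝ → ℝ) (h : ℝ → ℝ) (x : ℝ) : EReal :=
  ⨆ l ∈ Set.Iic (0 : ℝ), ((x * l - LambdaL φ h l : ℝ) : EReal)

set_option maxHeartbeats 1000000 in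
/-- Lemma 6: `λ − Λ_r(λ) → −ln(q + p₀)` and `λ − Λ_l(λ) → −ln(1 − q)` as `λ → −∞`. -/
theorem lambda_shift_limits
    (q : ℝ) (p : ℕ → ℝ) (hq : 0 < q) (hp : ∀ n, 0 ≤ p n)
    (hpsum : Summable p) (htotal : q + ∑' n : ℕ, p n = 1) (hp0 : p 0 < 1)
    (hmoment : Summable (fun n : ℕ => (n + 1 : ℝ) * p n))
    (hcrit : ∑' n : ℕ, (n + 1 : ℝ) * p n = 1)
    (h : ℝ → ℝ) (hmin : IsMinimalSolution (phi q p) h)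
:
    Tendsto (fun l => l - LambdaR q h l) atBot (𝓝 (-Real.log (q + p 0))) ∧
    Tendsto (fun l => l - LambdaL (phi q p) h l) atBot (𝓝 (-Real.log (1 - q))) := by
  have hsump : ∑' n : ℕ, p n = 1 - q := by linarith
  have hq1 : q < 1 := by
    by_contra hc
    push_neg at hc
    have h0 : ∀ n, p n = 0 := by
      intro n
      have h1 : p n ≤ ∑' n, p n := Summable.le_tsum hpsum n (fun m _ => hp m)
      have h2 : (0:ℝ) ≤ p n := hp n
      linarith
    have hz : ∑' n : ℕ, (n+1:ℝ) * p n = 0 := by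
      simp [h0]
    linarith
  have hqp0 : 0 < q + p 0 := by have := hp 0; linarith
  -- summability of the power series
  have hsumx : ∀ x : ℝ, 0 ≤ x → x ≤ 1 → Summable (fun n : ℕ => p n * x ^ n) := by
    intro x hx0 hx1
    refine Summable.of_nonneg_of_le (fun n => mul_nonneg (hp n) (pow_nonneg hx0 n))
      (fun n => ?_) hpsum
    calc p n * x ^ n ≤ p n * 1 :=
          mul_le_mul_of_nonneg_left (pow_le_one₀ hx0 hx1) (hp n)
      _ = p n := mul_one _
  have hphi_eq : ∀ x : ℝ, phi q p x = q + x * ∑' n : ℕ, p n * x ^ n := by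
    intro x
    unfold phi
    congr 1
    rw [← tsum_mul_left]
    exact tsum_congr fun n => by ring
  -- bounds on T x = ∑' p n x^n for x ∈ [0,1]
  have hTnonneg : ∀ x : ℝ, 0 ≤ x → (0:ℝ) ≤ ∑' n : ℕ, p n * x ^ n := fun x hx0 =>
    tsum_nonneg fun n => mul_nonneg (hp n) (pow_nonneg hx0 n)
  have hTle1 : ∀ x : ℝ, 0 ≤ x → x ≤ 1 → ∑' n : ℕ, p n * x ^ n ≤ 1 - q := by
    intro x hx0 hx1
    calc ∑' n : ℕ, p n * x ^ n ≤ ∑' n : ℕ, p n := by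
          refine Summable.tsum_le_tsum (fun n => ?_) (hsumx x hx0 hx1) hpsum
          calc p n * x ^ n ≤ p n * 1 :=
                mul_le_mul_of_nonneg_left (pow_le_one₀ hx0 hx1) (hp n)
            _ = p n := mul_one _
      _ = 1 - q := hsump
  have hTge : ∀ x : ℝ, 0 ≤ x → x ≤ 1 → p 0 ≤ ∑' n : ℕ, p n * x ^ n := by
    intro x hx0 hx1
    have := Summable.le_tsum (hsumx x hx0 hx1) 0
      (fun m _ => mul_nonneg (hp m) (pow_nonneg hx0 m))
    simpa using this
  have hTle : ∀ x : ℝ, 0 ≤ x → x ≤ 1 → ∑' n : ℕ, p n * x ^ n ≤ p 0 + x := by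
    intro x hx0 hx1
    have htail : Summable (fun n : ℕ => p (n+1) * x ^ (n+1)) :=
      (summable_nat_add_iff 1).2 (hsumx x hx0 hx1)
    have htail2 : Summable (fun n : ℕ => p (n+1) * x) :=
      ((summable_nat_add_iff 1).2 hpsum).mul_right x
    have hsplit : ∑' n : ℕ, p n * x ^ n = p 0 + ∑' n : ℕ, p (n+1) * x ^ (n+1) := by
      rw [Summable.tsum_eq_zero_add (hsumx x hx0 hx1)]
      simp
    rw [hsplit]
    have h1 : ∑' n : ℕ, p (n+1) * x ^ (n+1) ≤ ∑' n : ℕ, p (n+1) * x := by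
      refine Summable.tsum_le_tsum (fun n => ?_) htail htail2
      have : x ^ (n+1) ≤ x ^ 1 := pow_le_pow_of_le_one hx0 hx1 (by omega)
      calc p (n+1) * x ^ (n+1) ≤ p (n+1) * x ^ 1 :=
            mul_le_mul_of_nonneg_left this (hp _)
        _ = p (n+1) * x := by ring
    have h2 : ∑' n : ℕ, p (n+1) * x = (∑' n : ℕ, p (n+1)) * x := tsum_mul_right
    have h3 : ∑' n : ℕ, p (n+1) ≤ 1 - q := by
      have := (hpsum.sum_add_tsum_nat_add 1).symm
      have hnn : (0:ℝ) ≤ p 0 := hp 0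
      have : p 0 + ∑' n : ℕ, p (n+1) = 1 - q := by
        rw [← hsump]
        simpa using (hpsum.sum_add_tsum_nat_add 1)
      linarith
    have h4 : (∑' n : ℕ, p (n+1)) * x ≤ 1 * x := by
      apply mul_le_mul_of_nonneg_right _ hx0
      linarith
    linarith
  -- properties of h at exp l for l ≤ 0
  have hmem : ∀ l : ℝ, l ≤ 0 → Real.exp l ∈ Set.Icc (0:ℝ) 1 := by
    intro l hl
    constructor
    · exact (Real.exp_pos l).le
    · simpa using Real.exp_le_exp.2 hl
  have hx0 : ∀ l : ℝ, l ≤ 0 → 0 ≤ h (Real.exp l) := fun l hl =>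
    ((hmin _ (hmem l hl)).1).1
  have hx1 : ∀ l : ℝ, l ≤ 0 → h (Real.exp l) ≤ 1 := fun l hl =>
    ((hmin _ (hmem l hl)).1).2
  have heq : ∀ l : ℝ, l ≤ 0 →
      h (Real.exp l) = Real.exp l * phi q p (h (Real.exp l)) := fun l hl =>
    (hmin _ (hmem l hl)).2.1
  have hphile1 : ∀ x : ℝ, 0 ≤ x → x ≤ 1 → phi q p x ≤ 1 := by
    intro x hx0' hx1'
    rw [hphi_eq]
    have h1 : x * ∑' n : ℕ, p n * x ^ n ≤ 1 * (1 - q) := by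
      apply mul_le_mul hx1' (hTle1 x hx0' hx1') (hTnonneg x hx0') (by norm_num)
    linarith
  have hub : ∀ l : ℝ, l ≤ 0 → h (Real.exp l) ≤ Real.exp l := by
    intro l hl
    rw [heq l hl]
    calc Real.exp l * phi q p (h (Real.exp l)) ≤ Real.exp l * 1 :=
          mul_le_mul_of_nonneg_left (hphile1 _ (hx0 l hl) (hx1 l hl)) (Real.exp_pos l).le
      _ = Real.exp l := mul_one _
  -- h (exp l) → 0
  have hxlim : Tendsto (fun l : ℝ => h (Real.exp l)) atBot (𝓝 0) := by
    refine tendsto_of_tendsto_of_tendsto_of_le_of_le' tendsto_const_nhds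
      Real.tendsto_exp_atBot ?_ ?_
    · filter_upwards [eventually_le_atBot (0:ℝ)] with l hl using hx0 l hl
    · filter_upwards [eventually_le_atBot (0:ℝ)] with l hl using hub l hl
  -- T (h (exp l)) → p 0
  have hTlim : Tendsto (fun l : ℝ => ∑' n : ℕ, p n * (h (Real.exp l)) ^ n) atBot
      (𝓝 (p 0)) := by
    have hupper : Tendsto (fun l : ℝ => p 0 + h (Real.exp l)) atBot (𝓝 (p 0)) := by
      have hc : Tendsto (fun _ : ℝ => p 0) atBot (𝓝 (p 0)) := tendsto_const_nhds
      have := hc.add hxlim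
      simpa using this
    refine tendsto_of_tendsto_of_tendsto_of_le_of_le' tendsto_const_nhds hupper ?_ ?_
    · filter_upwards [eventually_le_atBot (0:ℝ)] with l hl using
        hTge _ (hx0 l hl) (hx1 l hl)
    · filter_upwards [eventually_le_atBot (0:ℝ)] with l hl using
        hTle _ (hx0 l hl) (hx1 l hl)
  -- phi (h (exp l)) → q
  have hphilim : Tendsto (fun l : ℝ => phi q p (h (Real.exp l))) atBot (𝓝 q) := by
    have : Tendsto (fun l : ℝ => q + h (Real.exp l) * ∑' n : ℕ, p n * (h (Real.exp l)) ^ n)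
        atBot (𝓝 (q + 0 * p 0)) := tendsto_const_nhds.add (hxlim.mul hTlim)
    simpa [hphi_eq] using this
  constructor
  · -- LambdaR limit
    have key : ∀ l : ℝ, l < 0 →
        l - LambdaR q h l = -Real.log (q + ∑' n : ℕ, p n * (h (Real.exp l)) ^ n) := by
      intro l hl
      have hle : l ≤ 0 := hl.le
      set s := Real.exp l with hs
      set x := h s with hxdef
      set t := ∑' n : ℕ, p n * x ^ n with ht
      have hspos : 0 < s := Real.exp_pos l
      have htnn : 0 ≤ t := hTnonneg x (hx0 l hle)
      have hxeq : x = s * (q + x * t) := by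
        have := heq l hle
        rwa [hphi_eq] at this
      have hxpos : 0 < x := by
        have hxge : 0 ≤ x := hx0 l hle
        have hxt : 0 ≤ x * t := mul_nonneg hxge htnn
        nlinarith [mul_pos hspos hq, mul_nonneg hspos.le hxt]
      have hident : 1 + q * s - q * s / x = s * (q + t) := by
        field_simp
        linear_combination hxeq
      have hqt : 0 < q + t := by linarith
      rw [LambdaR, if_pos hl, hident, Real.log_mul (ne_of_gt hspos) (ne_of_gt hqt),
        Real.log_exp]
      ring
    have hlog : Tendsto (fun l : ℝ => -Real.log (q + ∑' n : ℕ, p n * (h (Real.exp l)) ^ n))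
        atBot (𝓝 (-Real.log (q + p 0))) := by
      have hc : ContinuousAt Real.log (q + p 0) := Real.continuousAt_log (ne_of_gt hqp0)
      exact (hc.tendsto.comp (tendsto_const_nhds.add hTlim)).neg
    refine hlog.congr' ?_
    filter_upwards [eventually_lt_atBot (0:ℝ)] with l hl using (key l hl).symm
  · -- LambdaL limit
    have hratio : Tendsto (fun l : ℝ =>
        (1 - phi q p (h (Real.exp l))) / (1 - h (Real.exp l))) atBot (𝓝 (1 - q)) := by
      have hc1 : Tendsto (fun _ : ℝ => (1:ℝ)) atBot (𝓝 1) := tendsto_const_nhds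
      have := (hc1.sub hphilim).div (hc1.sub hxlim) (by norm_num : (1:ℝ) - 0 ≠ 0)
      simp only [sub_zero, div_one] at this
      exact this
    have hlog : Tendsto (fun l : ℝ => -Real.log
        ((1 - phi q p (h (Real.exp l))) / (1 - h (Real.exp l)))) atBot
        (𝓝 (-Real.log (1 - q))) := by
      have hc : ContinuousAt Real.log (1 - q) := Real.continuousAt_log (by linarith)
      exact (hc.tendsto.comp hratio).neg
    refine hlog.congr' ?_
    filter_upwards [eventually_lt_atBot (0:ℝ)] with l hl
    rw [LambdaL, if_pos hl]
    ring
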